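/- If δ := v̄ − (g/k₁ᵛ)(e₃ − γ̄) where (v̄, γ̄) solves the error system v̄' = g(e₃ − γ̄) − k₁ᵛ v̄ + k₂ᵛ γ̄ × (γ̄ × v̄), γ̄' = −k₁ʳ γ̄ × (γ̄ × v̄) with the gain equality k₁ʳ = k₁ᵛ k₂ᵛ / g and |γ̄| = 1, then δ satisfies δ' = −k₁ᵛ δ. -/

import Mathlib

open Matrix

noncomputable section

def cross3 (u v : Fin 3 → ℝ) : Fin 3 → ℝ :=
  ![u 1 * v 2 - u 2 * v 1, u 2 * v 0 - u 0 * v 2, u 0 * v 1 - u 1 * v 0]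

def norm3 (u : Fin 3 → ℝ) : ℝ := Real.sqrt (u ⬝ᵥ u)

def e3 : Fin 3 → ℝ := ![0, 0, 1]

/-- when `k₁ʳ = k₁ᵛ k₂ᵛ / g`, the variable
`δ = v̄ − (g/k₁ᵛ)(e₃ − γ̄)` satisfies `δ' = −k₁ᵛ δ`. -/
theorem stmt_3 (g k1v k2v k1r : ℝ) (hg : 0 < g) (h1 : 0 < k1v) (h2 : 0 < k2v)
    (h3 : 0 < k1r) (hgain : k1r = k1v * k2v / g)
    (v γ : ℝ → Fin 3 → ℝ) (hγunit : ∀ t, norm3 (γ t) = 1)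
    (hv : ∀ t, HasDerivAt v
      (g • (e3 - γ t) - k1v • v t + k2v • cross3 (γ t) (cross3 (γ t) (v t))) t)
    (hγ : ∀ t, HasDerivAt γ (-(k1r • cross3 (γ t) (cross3 (γ t) (v t)))) t) :
    ∀ t, HasDerivAt (fun s => v s - (g / k1v) • (e3 - γ s))
      (-(k1v • (v t - (g / k1v) • (e3 - γ t)))) t := by
  intro t
  have h := (hv t).sub (((hγ t).const_sub e3).const_smul (g / k1v))
  convert h using 1
  any_goals rfl
  set P := cross3 (γ t) (cross3 (γ t) (v t)) with hP
  set P := cross3 (γ t) (cross3 (γ t) (v t)) with hP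
  have hc : (g / k1v) * k1r = k2v := by
    rw [hgain]; field_simp
  have hk : k1v * (g / k1v) = g := by field_simp
  rw [neg_neg, smul_smul, hc, smul_sub, smul_smul, hk]
  abel
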